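/- Let k be a field and A a commutative integral domain equipped with an ℕ-grading 𝒜 : ℕ → Submodule k A making A a graded k-algebra. Assume every element of the degree-zero part 𝒜 0 is algebraic over k, and assume there exists a family of r+1 elements of A that is algebraically independent over k. Then there exist d ≥ 1 and a family u : Fin (r+1) → A with u i ∈ 𝒜 d for every i such that u is algebraically independent over k; that is, A contains r+1 homogeneous elements of one and the same positive degree that are algebraically independent over k. -/

import Mathlib

set_option maxHeartbeats 1000000
set_option synthInstance.maxHeartbeats 1000000

namespace ExistsAlgIndepHomogAux

open IntermediateField

variable {k E : Type*} [Field k] [Field E] [Algebra k E]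

theorem exists_den (s : Set E) {x : E} (hx : x ∈ adjoin k s) :
    ∃ r t, r ∈ Algebra.adjoin k s ∧ t ∈ Algebra.adjoin k s ∧ t ≠ (0:E) ∧ x * t = r := by
  let R := Algebra.adjoin k s
  let M : Subfield E :=
  { carrier := {x | ∃ r t, r ∈ R ∧ t ∈ R ∧ t ≠ (0:E) ∧ x * t = r}
    one_mem' := ⟨1, 1, one_mem R, one_mem R, one_ne_zero, one_mul 1⟩
    zero_mem' := ⟨0, 1, zero_mem R, one_mem R, one_ne_zero, zero_mul 1⟩
    mul_mem' := by
      rintro a b ⟨r1, t1, hr1, ht1, h1, e1⟩ ⟨r2, t2, hr2, ht2, h2, e2⟩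
      exact ⟨r1 * r2, t1 * t2, mul_mem hr1 hr2, mul_mem ht1 ht2, mul_ne_zero h1 h2,
        by rw [← e1, ← e2]; ring⟩
    add_mem' := by
      rintro a b ⟨r1, t1, hr1, ht1, h1, e1⟩ ⟨r2, t2, hr2, ht2, h2, e2⟩
      exact ⟨r1 * t2 + r2 * t1, t1 * t2, add_mem (mul_mem hr1 ht2) (mul_mem hr2 ht1),
        mul_mem ht1 ht2, mul_ne_zero h1 h2, by rw [← e1, ← e2]; ring⟩
    neg_mem' := by
      rintro a ⟨r1, t1, hr1, ht1, h1, e1⟩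
      exact ⟨-r1, t1, neg_mem hr1, ht1, h1, by rw [← e1]; ring⟩
    inv_mem' := by
      rintro a ⟨r1, t1, hr1, ht1, h1, e1⟩
      rcases eq_or_ne a 0 with rfl | ha
      · exact ⟨0, 1, zero_mem R, one_mem R, one_ne_zero, by simp⟩
      · have hr0 : r1 ≠ (0:E) := by
          rw [← e1]; exact mul_ne_zero ha h1
        exact ⟨t1, r1, ht1, hr1, hr0, by rw [← e1, ← mul_assoc, inv_mul_cancel₀ ha, one_mul]⟩ }
  have hle : (adjoin k s).toSubfield ≤ M := by
    rw [adjoin_toSubfield]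
    apply Subfield.closure_le.mpr
    rintro x (⟨y, rfl⟩ | hxs)
    · exact ⟨algebraMap k E y, 1, Subalgebra.algebraMap_mem R y, one_mem R, one_ne_zero, mul_one _⟩
    · exact ⟨x, 1, Algebra.subset_adjoin hxs, one_mem R, one_ne_zero, mul_one _⟩
  exact hle hx

noncomputable instance algadj (s : Set E) : Algebra (Algebra.adjoin k s) (adjoin k s) :=
  ((Subalgebra.inclusion (algebra_adjoin_le_adjoin k s)).toRingHom :
    Algebra.adjoin k s →+* (adjoin k s).toSubalgebra).toAlgebra

instance (s : Set E) : IsScalarTower (Algebra.adjoin k s) (adjoin k s) E :=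
  .of_algebraMap_eq fun _ => rfl

theorem isFR (s : Set E) : IsFractionRing (Algebra.adjoin k s) (adjoin k s) := by
  have hinj : Function.Injective
      (algebraMap (Algebra.adjoin k s) (adjoin k s)) :=
    Subalgebra.inclusion_injective (algebra_adjoin_le_adjoin k s)
  refine ⟨⟨?_, ?_, ?_⟩⟩
  · rintro ⟨t, ht⟩
    have ht0 : (t : E) ≠ 0 := fun h =>
      nonZeroDivisors.ne_zero ht (by exact_mod_cast h)
    refine isUnit_iff_ne_zero.mpr fun h => ht0 ?_
    exact congrArg (fun z : adjoin k s => (z : E)) h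
  · rintro ⟨z, hz⟩
    obtain ⟨r, t, hr, ht, ht0, he⟩ := exists_den s hz
    refine ⟨⟨⟨r, hr⟩, ⟨⟨t, ht⟩, mem_nonZeroDivisors_of_ne_zero
      (fun h => ht0 (by simpa using congrArg (fun z : Algebra.adjoin k s => (z : E)) h))⟩⟩,
      Subtype.ext ?_⟩
    exact he
  · intro x y h
    exact ⟨1, by rw [hinj h]⟩

theorem bridge (s : Set E) (z : E) :
    IsAlgebraic (Algebra.adjoin k s) z ↔ IsAlgebraic (adjoin k s) z := by
  have := isFR (k := k) s
  exact IsFractionRing.isAlgebraic_iff (Algebra.adjoin k s) (adjoin k s) E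

theorem mono_alg {s t : Set E} (hst : s ⊆ t) {z : E} (hz : IsAlgebraic (adjoin k s) z) :
    IsAlgebraic (adjoin k t) z :=
  IsAlgebraic.tower_top_of_subalgebra_le
    (A := (adjoin k s).toSubalgebra) (B := (adjoin k t).toSubalgebra)
    (by exact_mod_cast adjoin.mono k _ _ hst) hz

theorem trans_alg {s t : Set E} (ht : ∀ w ∈ t, IsAlgebraic (adjoin k s) w) {z : E}
    (hz : IsAlgebraic (adjoin k (s ∪ t)) z) : IsAlgebraic (adjoin k s) z := by
  rw [← adjoin_adjoin_left] at hz
  have hz' : IsAlgebraic (adjoin (adjoin k s) t) z := hz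
  have halg : Algebra.IsAlgebraic (adjoin k s) (adjoin (adjoin k s) t) :=
    isAlgebraic_adjoin (fun x hx => (isAlgebraic_iff_isIntegral).mp (ht x hx))
  have hint : Algebra.IsIntegral (adjoin k s) (adjoin (adjoin k s) t) :=
    Algebra.isAlgebraic_iff_isIntegral.mp halg
  rw [isAlgebraic_iff_isIntegral] at hz' ⊢
  exact isIntegral_trans z hz'

theorem mem_alg {s : Set E} {w : E} (hw : w ∈ s) : IsAlgebraic (adjoin k s) w :=
  isAlgebraic_algebraMap (⟨w, subset_adjoin k s hw⟩ : adjoin k s)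

theorem atom {s : Set E} {a b : E} (htr : Transcendental (adjoin k s) a)
    (hab : IsAlgebraic (adjoin k (insert b s)) a) :
    IsAlgebraic (adjoin k (insert a s)) b := by
  by_cases hb : IsAlgebraic (adjoin k s) b
  · exact mono_alg (Set.subset_insert a s) hb
  set L := adjoin k s
  have hbt : Transcendental L b := hb
  have hat : Transcendental L a := htr
  have h1 : AlgebraicIndependent L (fun _ : Unit => b) :=
    (algebraicIndependent_unique_type_iff).mpr hbt
  have h3 : AlgebraicIndependent L (fun _ : Unit => a) :=
    (algebraicIndependent_unique_type_iff).mpr hat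
  have hab' : IsAlgebraic (adjoin L ({b} : Set E)) a := by
    have : IsAlgebraic (adjoin k (s ∪ {b})) a := by
      rwa [Set.union_singleton]
    rw [← adjoin_adjoin_left] at this
    exact this
  have h2 : ¬ AlgebraicIndependent L (fun o : Option Unit => o.elim a (fun _ => b)) := by
    rw [h1.option_iff_transcendental a]
    intro htr2
    refine htr2 ?_
    rw [Set.range_const]
    exact (bridge {b} a).mpr hab'
  have h4 : ¬ AlgebraicIndependent L (fun o : Option Unit => o.elim b (fun _ => a)) := by
    intro hcon
    apply h2
    let e : Option Unit ≃ Option Unit :=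
      ⟨fun o => o.elim (some ()) (fun _ => none), fun o => o.elim (some ()) (fun _ => none),
        by rintro (_|_) <;> rfl, by rintro (_|_) <;> rfl⟩
    have := hcon.comp e e.injective
    convert this using 1
    funext o
    rcases o with _ | u
    · rfl
    · rfl
  rw [h3.option_iff_transcendental b] at h4
  have h5 : IsAlgebraic (Algebra.adjoin L (Set.range fun _ : Unit => a)) b := not_not.mp h4
  rw [Set.range_const] at h5
  have h6 : IsAlgebraic (adjoin L ({a} : Set E)) b := (bridge {a} b).mp h5
  have : IsAlgebraic (adjoin k (s ∪ {a})) b := by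
    rw [← adjoin_adjoin_left]
    exact h6
  rwa [Set.union_singleton] at this

theorem ind_trans {N : ℕ} {x : Fin N → E} (hx : AlgebraicIndependent k x)
    (P : Finset (Fin N)) {i0 : Fin N} (hi0 : i0 ∉ P) :
    Transcendental (adjoin k (x '' ↑P)) (x i0) := by
  set y : ((P : Set (Fin N))) → E := fun p => x p
  have hy : AlgebraicIndependent k y := hx.comp _ Subtype.val_injective
  have hopt : AlgebraicIndependent k (fun o : Option (P : Set (Fin N)) => o.elim (x i0) y) := by
    have hg : Function.Injective (fun o : Option (P : Set (Fin N)) => o.elim i0 Subtype.val) := by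
      rintro (_ | p) (_ | q) h
      · rfl
      · simp only [Option.elim] at h; exact absurd (h ▸ q.2) hi0
      · simp only [Option.elim] at h; exact absurd (h ▸ p.2) hi0
      · simp only [Option.elim] at h; exact congrArg some (Subtype.ext h)
    have := hx.comp _ hg
    convert this using 1
    funext o; rcases o with _ | p <;> rfl
  have := (hy.option_iff_transcendental (x i0)).mp hopt
  have hr : Set.range y = x '' ↑P := by
    ext z; simp [y]
  rw [hr] at this
  intro halg
  exact this ((bridge _ _).mpr halg)

theorem alg_of_not_indep_insert {u : Set E} (hu : AlgebraicIndependent k ((↑) : u → E)) {z : E}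
    (hz : z ∉ u) (hni : ¬ AlgebraicIndependent k ((↑) : ↥(insert z u) → E)) :
    IsAlgebraic (Algebra.adjoin k u) z := by
  classical
  by_contra htr
  apply hni
  convert ((Subtype.range_coe ▸ hu.option_iff_transcendental z).2 htr).comp _
    (Set.subtypeInsertEquivOption hz).injective
  ext x
  by_cases h : ↑x = z <;> simp [h, Set.subtypeInsertEquivOption]

theorem bound {N : ℕ} {x : Fin N → E} (hx : AlgebraicIndependent k x) :
    ∀ (c : ℕ) (t : Finset E) (P : Finset (Fin N)), t.card = c → t.card + P.card < N →
    (∀ i, IsAlgebraic (adjoin k (↑t ∪ x '' ↑P)) (x i)) → False := by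
  classical
  intro c
  induction c using Nat.strong_induction_on with
  | _ c IH =>
  intro t P hc hcard hgood
  have hPU : P ≠ Finset.univ := by
    intro h
    rw [h, Finset.card_univ, Fintype.card_fin] at hcard
    omega
  obtain ⟨i0, hi0⟩ : ∃ i0, i0 ∉ P := by
    by_contra hcon
    push_neg at hcon
    exact hPU (Finset.eq_univ_iff_forall.mpr hcon)
  have htr0 := ind_trans hx P hi0
  rcases Nat.eq_zero_or_pos c with rfl | hcpos
  · rw [Finset.card_eq_zero] at hc
    subst hc
    apply htr0
    have he : (↑(∅:Finset E) : Set E) ∪ x '' ↑P = x '' ↑P := by simp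
    have h := hgood i0
    rwa [he] at h
  set 𝒯 := t.powerset.filter
    (fun t' : Finset E => IsAlgebraic (adjoin k ((↑t' : Set E) ∪ x '' ↑P)) (x i0)) with h𝒯
  have ht𝒯 : t ∈ 𝒯 := by
    rw [h𝒯, Finset.mem_filter]
    exact ⟨Finset.mem_powerset_self t, hgood i0⟩
  obtain ⟨t', ht'𝒯, hmin⟩ := Finset.exists_min_image 𝒯 Finset.card ⟨t, ht𝒯⟩
  rw [h𝒯, Finset.mem_filter, Finset.mem_powerset] at ht'𝒯
  obtain ⟨ht't, ht'alg⟩ := ht'𝒯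
  have ht'ne : t' ≠ ∅ := by
    rintro rfl
    apply htr0
    have he : (↑(∅:Finset E) : Set E) ∪ x '' ↑P = x '' ↑P := by simp
    rwa [he] at ht'alg
  obtain ⟨b, hb⟩ := Finset.nonempty_of_ne_empty ht'ne
  have htrmin : Transcendental (adjoin k (↑(t'.erase b) ∪ x '' ↑P)) (x i0) := by
    intro halg
    have hmem : t'.erase b ∈ 𝒯 := by
      rw [h𝒯, Finset.mem_filter, Finset.mem_powerset]
      exact ⟨(Finset.erase_subset b t').trans ht't, halg⟩
    have := hmin _ hmem
    have hlt : (t'.erase b).card < t'.card := Finset.card_erase_lt_of_mem hb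
    omega
  have hab : IsAlgebraic (adjoin k (insert b (↑(t'.erase b) ∪ x '' ↑P))) (x i0) := by
    have : insert b (↑(t'.erase b) ∪ x '' ↑P) = (↑t' : Set E) ∪ x '' ↑P := by
      rw [← Set.insert_union, ← Finset.coe_insert, Finset.insert_erase hb]
    rw [this]
    exact ht'alg
  have hbalg := atom htrmin hab
  set P' := insert i0 P with hP'
  set t'' := t.erase b with ht''
  have hgood' : ∀ i, IsAlgebraic (adjoin k (↑t'' ∪ x '' ↑P')) (x i) := by
    intro i
    apply trans_alg (t := (↑t : Set E) ∪ x '' ↑P)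
    · rintro w (hw | ⟨j, hj, rfl⟩)
      · rcases eq_or_ne w b with rfl | hne
        · refine mono_alg ?_ hbalg
          rintro z (rfl | (hz | hz))
          · exact Or.inr ⟨i0, by simp [hP'], rfl⟩
          · exact Or.inl (by
              rw [ht'']
              exact_mod_cast Finset.mem_coe.mpr
                ((Finset.erase_subset_erase _ ht't) (Finset.mem_coe.mp hz)))
          · exact Or.inr (Set.image_mono (f := x) (by simp [hP']) hz)
        · exact mem_alg (Or.inl (by
            rw [ht'']
            exact Finset.mem_coe.mpr (Finset.mem_erase.mpr ⟨hne, Finset.mem_coe.mp hw⟩)))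
      · exact mem_alg (Or.inr ⟨j, by simp [hP', hj], rfl⟩)
    · exact mono_alg Set.subset_union_right (hgood i)
  have hcard'' : t''.card = c - 1 := by
    rw [ht'', Finset.card_erase_of_mem (ht't hb), hc]
  apply IH (c-1) (by omega) t'' P' hcard''
  · have h1 : P'.card ≤ P.card + 1 := Finset.card_insert_le i0 P
    omega
  · exact hgood'

end ExistsAlgIndepHomogAux

open ExistsAlgIndepHomogAux IntermediateField in
/-- Auxiliary: extraction of algebraically independent homogeneous elements of positive degrees. -/
theorem exists_algIndep_homog_aux
    (k A : Type*) [Field k] [CommRing A] [IsDomain A] [Algebra k A]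
    (𝒜 : ℕ → Submodule k A) [GradedAlgebra 𝒜] (r : ℕ)
    (h0 : ∀ x ∈ 𝒜 0, IsAlgebraic k x)
    (v : Fin (r + 1) → A) (hv : AlgebraicIndependent k v) :
    ∃ (w : Fin (r+1) → A) (d : Fin (r+1) → ℕ),
      (∀ i, 1 ≤ d i) ∧ (∀ i, w i ∈ 𝒜 (d i)) ∧ AlgebraicIndependent k w := by
  classical
  set E := FractionRing A
  have hAE : Function.Injective (algebraMap A E) := IsFractionRing.injective A E
  set φ : A →ₐ[k] E := IsScalarTower.toAlgHom k A E with hφ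
  have hφinj : Function.Injective φ := hAE
  have hva : AlgebraicIndependent k (φ ∘ v) := hv.map' hφinj
  set S : Set E := {z | ∃ a : A, ∃ dd : ℕ, 1 ≤ dd ∧ a ∈ 𝒜 dd ∧ algebraMap A E a = z} with hS
  have h₀ : AlgebraicIndependent k ((↑) : (∅ : Set E) → E) := algebraicIndependent_empty
  obtain ⟨u, -, hmax⟩ :=
    exists_maximal_algebraicIndependent (∅ : Set E) S (Set.empty_subset S) h₀
  obtain ⟨⟨hu, huS⟩, hmax2⟩ := hmax
  obtain ⟨t, htu, htcard⟩ | ⟨f, hfinj, hfu⟩ :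
      (∃ t : Finset E, ↑t = u ∧ t.card ≤ r) ∨
      (∃ f : Fin (r+1) → E, Function.Injective f ∧ Set.range f ⊆ u) := by
    by_cases hufin : u.Finite
    · rcases le_or_gt hufin.toFinset.card r with hle | hgt
      · exact Or.inl ⟨hufin.toFinset, hufin.coe_toFinset, hle⟩
      · right
        obtain ⟨t', ht't, hct'⟩ := Finset.exists_subset_card_eq hgt
        set e := (Finset.equivFinOfCardEq hct').symm
        refine ⟨fun i => ((e i : E)), ?_, ?_⟩
        · intro i j hij
          apply e.injective
          exact Subtype.ext hij
        · rintro z ⟨i, rfl⟩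
          rw [← hufin.coe_toFinset]
          exact_mod_cast ht't (e i).2
    · right
      set g := (Set.Infinite.natEmbedding u hufin)
      refine ⟨fun i => ((g i : E)), ?_, ?_⟩
      · intro i j hij
        have := g.injective (Subtype.ext hij)
        exact Fin.val_injective this
      · rintro z ⟨i, rfl⟩
        exact (g i).2
  · -- small case: contradiction
    exfalso
    have hSalg : ∀ z ∈ S, IsAlgebraic (adjoin k u) z := by
      intro z hzS
      by_cases hzu : z ∈ u
      · exact mem_alg hzu
      · have hni : ¬ AlgebraicIndependent k ((↑) : ↥(insert z u) → E) := by
          intro hind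
          have hle : insert z u ⊆ u :=
            hmax2 ⟨hind, Set.insert_subset hzS huS⟩ (Set.subset_insert z u)
          exact hzu (hle (Set.mem_insert z u))
        exact (bridge u z).mp (alg_of_not_indep_insert hu hzu hni)
    have good0 : ∀ i, IsAlgebraic (adjoin k u) ((φ ∘ v) i) := by
      intro i
      have hdecomp : (φ ∘ v) i
          = ∑ d ∈ (DirectSum.decompose 𝒜 (v i)).support,
              algebraMap A E (DirectSum.decompose 𝒜 (v i) d : A) := by
        rw [Function.comp_apply, show (φ (v i) : E) = algebraMap A E (v i) from rfl]
        rw [← map_sum]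
        rw [DirectSum.sum_support_decompose 𝒜 (v i)]
      rw [hdecomp, isAlgebraic_iff_isIntegral]
      apply IsIntegral.sum
      intro d _
      rw [← isAlgebraic_iff_isIntegral]
      rcases Nat.eq_zero_or_pos d with rfl | hdpos
      · have h0' : IsAlgebraic k ((DirectSum.decompose 𝒜 (v i) 0 : A)) :=
          h0 _ (SetLike.coe_mem _)
        have h0'' : IsAlgebraic k (algebraMap A E (DirectSum.decompose 𝒜 (v i) 0 : A)) :=
          (isAlgebraic_algebraMap_iff hAE).mpr h0'
        exact IsAlgebraic.tower_top (L := adjoin k u) h0''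
      · exact hSalg _ ⟨_, d, hdpos, SetLike.coe_mem _, rfl⟩
    apply bound hva t.card t (∅ : Finset (Fin (r+1))) rfl
    · simpa using Nat.lt_succ_of_le htcard
    · intro i
      have hset : (↑t : Set E) ∪ (φ ∘ v) '' ↑(∅ : Finset (Fin (r+1))) = u := by
        simp [htu]
      rw [hset]
      exact good0 i
  · -- big case: extract the family
    have hfS : ∀ i, f i ∈ S := fun i => huS (hfu ⟨i, rfl⟩)
    choose a d hd1 hmem heq using hfS
    refine ⟨a, d, hd1, hmem, ?_⟩
    apply AlgebraicIndependent.of_comp φ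
    have hcomp : φ ∘ a = f := funext fun i => heq i
    rw [hcomp]
    have h1 : AlgebraicIndependent k
        (((↑) : u → E) ∘ (fun i : Fin (r+1) => (⟨f i, hfu ⟨i, rfl⟩⟩ : u))) :=
      hu.comp _ (fun i j hij => hfinj (congrArg Subtype.val hij))
    exact h1

/-- **Existence of algebraically independent homogeneous elements of a common
positive degree.**

Let `A` be a graded integral domain over a field `k` such that every element of
the degree-zero part is algebraic over `k`.  If `A` contains `r + 1` elements
that are algebraically independent over `k`, then `A` contains `r + 1`
homogeneous elements, all of one and the same positive degree `d`, that are
algebraically independent over `k`. -/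
theorem exists_algIndep_homogeneous_same_degree
    (k A : Type*) [Field k] [CommRing A] [IsDomain A] [Algebra k A]
    (𝒜 : ℕ → Submodule k A) [GradedAlgebra 𝒜] (r : ℕ)
    (h0 : ∀ x ∈ 𝒜 0, IsAlgebraic k x)
    (h : ∃ v : Fin (r + 1) → A, AlgebraicIndependent k v) :
    ∃ d : ℕ, 1 ≤ d ∧ ∃ u : Fin (r + 1) → A,
      (∀ i, u i ∈ 𝒜 d) ∧ AlgebraicIndependent k u := by
  classical
  obtain ⟨v, hv⟩ := h
  obtain ⟨w, d, hd1, hmem, hw⟩ := exists_algIndep_homog_aux k A 𝒜 r h0 v hv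
  set D := ∏ i, d i with hD
  have hdvd : ∀ i, d i ∣ D := fun i => Finset.dvd_prod_of_mem d (Finset.mem_univ i)
  have hDpos : 0 < D := Finset.prod_pos (fun i _ => hd1 i)
  have hn1 : ∀ i, 1 ≤ D / d i := fun i =>
    (Nat.one_le_div_iff (hd1 i)).mpr (Nat.le_of_dvd hDpos (hdvd i))
  refine ⟨D, hDpos, fun i => w i ^ (D / d i), fun i => ?_, ?_⟩
  · have := SetLike.pow_mem_graded (D / d i) (hmem i)
    rwa [smul_eq_mul, Nat.div_mul_cancel (hdvd i)] at this
  · have htx : ∀ i : Fin (r+1), Transcendental k ((Polynomial.X : Polynomial k) ^ (D / d i)) :=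
      fun i => (Polynomial.transcendental_X k).pow (hn1 i)
    have := hw.polynomial_aeval_of_transcendental htx
    convert this using 1
    funext i
    simp
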